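/- Let D be a (pre)triangulated category, let Z be a ℂ-valued function on objects of D that is additive on distinguished triangles, and let P(φ) ⊆ D (φ ∈ ℝ) be strictly full additive subcategories satisfying: (s1) every nonzero E ∈ P(φ) satisfies Z(E) = m·exp(iπφ) for some real m > 0; (s2) if φ > ψ then Hom_D(E,F) = 0 for all E ∈ P(φ) and F ∈ P(ψ); (s3) P(φ+1) = P(φ)[1]. Say that an object X of D has a Harder–Narasimhan filtration if there is a finite sequence of morphisms 0 = X₀ → X₁ → ⋯ → Xₙ = X such that for each i the cone of X_{i−1} → X_i is a nonzero object of P(φ_i), with φ₁ > φ₂ > ⋯ > φₙ. If X and Y have Harder–Narasimhan filtrations, then so does the biproduct X ⊕ Y. -/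

import Mathlib

open CategoryTheory Limits Pretriangulated

universe v u

variable {D : Type u} [Category.{v} D] [HasZeroObject D] [Preadditive D] [HasShift D ℤ]
  [∀ n : ℤ, (CategoryTheory.shiftFunctor D n).Additive] [Pretriangulated D]

/-- Transport of a distinguished triangle along isomorphisms of the first two objects. -/
lemma exists_dist_conj {W V W' V' A : D} (e₁ : W' ≅ W) (e₂ : V ≅ V') {u : W ⟶ V} {g : V ⟶ A}
    {h : A ⟶ W⟦(1 : ℤ)⟧} (hd : Triangle.mk u g h ∈ distTriang D) (u' : W' ⟶ V')
    (hu' : u' = e₁.hom ≫ u ≫ e₂.hom) :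
    ∃ (g' : V' ⟶ A) (h' : A ⟶ W'⟦(1 : ℤ)⟧), Triangle.mk u' g' h' ∈ distTriang D := by
  refine ⟨e₂.inv ≫ g, h ≫ (shiftFunctor D (1 : ℤ)).map e₁.inv, ?_⟩
  refine isomorphic_distinguished _ hd _ ?_
  refine Triangle.isoMk _ _ e₁ e₂.symm (Iso.refl A) ?_ ?_ ?_
  · dsimp only [Triangle.mk]; simp [hu']
  · dsimp only [Triangle.mk]; simp
  · dsimp only [Triangle.mk]; simp [← Functor.map_comp]

noncomputable def biprodIsoPi (F : WalkingPair → D) [HasBinaryBiproducts D]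
    [HasProduct F] : (F .left ⊞ F .right) ≅ ∏ᶜ F where
  hom := Pi.lift (fun j => WalkingPair.casesOn j biprod.fst biprod.snd)
  inv := biprod.lift (Pi.π F .left) (Pi.π F .right)
  hom_inv_id := by ext <;> simp
  inv_hom_id := by apply Pi.hom_ext; rintro ⟨_ | _⟩ <;> simp

/-- The biproduct of two distinguished triangles is distinguished (existence form). -/
lemma biprod_dist [HasBinaryBiproducts D] {X₁ Y₁ A₁ X₂ Y₂ A₂ : D}
    {f₁ : X₁ ⟶ Y₁} {g₁ : Y₁ ⟶ A₁} {h₁ : A₁ ⟶ X₁⟦(1 : ℤ)⟧}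
    (hT₁ : Triangle.mk f₁ g₁ h₁ ∈ distTriang D)
    {f₂ : X₂ ⟶ Y₂} {g₂ : Y₂ ⟶ A₂} {h₂ : A₂ ⟶ X₂⟦(1 : ℤ)⟧}
    (hT₂ : Triangle.mk f₂ g₂ h₂ ∈ distTriang D) :
    ∃ (A : D) (g : Y₁ ⊞ Y₂ ⟶ A) (h : A ⟶ (X₁ ⊞ X₂)⟦(1 : ℤ)⟧),
      (Triangle.mk (biprod.map f₁ f₂) g h ∈ distTriang D) ∧ Nonempty (A ≅ A₁ ⊞ A₂) := by
  obtain ⟨A, g, h, hd⟩ := distinguished_cocone_triangle (biprod.map f₁ f₂)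
  let T : WalkingPair → Triangle D := fun j =>
    WalkingPair.casesOn j (Triangle.mk f₁ g₁ h₁) (Triangle.mk f₂ g₂ h₂)
  have hTp : productTriangle T ∈ distTriang D :=
    productTriangle_distinguished T (by rintro (_ | _) <;> assumption)
  let e₁ : X₁ ⊞ X₂ ≅ ∏ᶜ (fun j => (T j).obj₁) := biprodIsoPi (fun j => (T j).obj₁)
  let e₂ : Y₁ ⊞ Y₂ ≅ ∏ᶜ (fun j => (T j).obj₂) := biprodIsoPi (fun j => (T j).obj₂)
  have comm : biprod.map f₁ f₂ ≫ e₂.hom = e₁.hom ≫ (productTriangle T).mor₁ := by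
    apply Pi.hom_ext
    rintro (_ | _)
    · have h1 : e₂.hom ≫ Pi.π (fun j => (T j).obj₂) .left = biprod.fst := Pi.lift_π _ _
      have h2 : e₁.hom ≫ Pi.π (fun j => (T j).obj₁) .left = biprod.fst := Pi.lift_π _ _
      have h3 : (productTriangle T).mor₁ ≫ Pi.π (fun j => (T j).obj₂) .left =
          Pi.π (fun j => (T j).obj₁) .left ≫ f₁ := Pi.map_π (fun j => (T j).mor₁) _
      erw [Category.assoc, Category.assoc, h3, ← Category.assoc e₁.hom, h2, h1]
      exact biprod.map_fst _ _
    · have h1 : e₂.hom ≫ Pi.π (fun j => (T j).obj₂) .right = biprod.snd := Pi.lift_π _ _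
      have h2 : e₁.hom ≫ Pi.π (fun j => (T j).obj₁) .right = biprod.snd := Pi.lift_π _ _
      have h3 : (productTriangle T).mor₁ ≫ Pi.π (fun j => (T j).obj₂) .right =
          Pi.π (fun j => (T j).obj₁) .right ≫ f₂ := Pi.map_π (fun j => (T j).mor₁) _
      erw [Category.assoc, Category.assoc, h3, ← Category.assoc e₁.hom, h2, h1]
      exact biprod.map_snd _ _
  have e := isoTriangleOfIso₁₂ _ _ hd hTp e₁ e₂ comm
  exact ⟨A, g, h, hd, ⟨Triangle.π₃.mapIso e ≪≫ (biprodIsoPi (fun j => (T j).obj₃)).symm⟩⟩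

noncomputable def isZeroBiprodLeftIso [HasBinaryBiproducts D] {E : D} (F : D) (hE : IsZero E) :
    E ⊞ F ≅ F where
  hom := biprod.snd
  inv := biprod.inr
  hom_inv_id := by
    have h1 : (biprod.fst : E ⊞ F ⟶ E) ≫ (biprod.inl : E ⟶ E ⊞ F) = 0 := by
      rw [hE.eq_of_tgt (biprod.fst : E ⊞ F ⟶ E) 0, zero_comp]
    rw [← biprod.total, h1, zero_add]
  inv_hom_id := by simp

noncomputable def isZeroBiprodRightIso [HasBinaryBiproducts D] (E : D) {F : D} (hF : IsZero F) :
    E ⊞ F ≅ E where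
  hom := biprod.fst
  inv := biprod.inl
  hom_inv_id := by
    have h1 : (biprod.snd : E ⊞ F ⟶ F) ≫ (biprod.inr : F ⟶ E ⊞ F) = 0 := by
      rw [hF.eq_of_tgt (biprod.snd : E ⊞ F ⟶ F) 0, zero_comp]
    rw [← biprod.total, h1, add_zero]
  inv_hom_id := by simp

lemma notIsZeroBiprodLeft [HasBinaryBiproducts D] {A : D} (B : D) (hA : ¬ IsZero A) :
    ¬ IsZero (A ⊞ B) := by
  intro h
  refine hA ?_
  rw [IsZero.iff_id_eq_zero]
  rw [← biprod.inl_fst (X := A) (Y := B), h.eq_of_tgt biprod.inl 0, zero_comp]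

lemma notIsZeroBiprodRight [HasBinaryBiproducts D] (A : D) {B : D} (hB : ¬ IsZero B) :
    ¬ IsZero (A ⊞ B) := by
  intro h
  refine hB ?_
  rw [IsZero.iff_id_eq_zero]
  rw [← biprod.inr_snd (X := A) (Y := B), h.eq_of_tgt biprod.inr 0, zero_comp]

/-- Chains of extensions with strictly increasing slopes read from the top. -/
inductive HNChain (P : ℝ → Set D) : D → List ℝ → Prop
  | zero (E : D) (hE : IsZero E) : HNChain P E []
  | step {C V A : D} {l : List ℝ} {φ : ℝ} (u : C ⟶ V) (g : V ⟶ A) (h : A ⟶ C⟦(1 : ℤ)⟧)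
      (hd : Triangle.mk u g h ∈ distTriang D) (hA : ¬ IsZero A) (hP : A ∈ P φ)
      (hφ : ∀ ψ ∈ l, φ < ψ) (hC : HNChain P C l) : HNChain P V (φ :: l)

lemma HNChain.of_iso {P : ℝ → Set D} {E E' : D} {l : List ℝ} (h : HNChain P E l)
    (e : E ≅ E') : HNChain P E' l := by
  cases h with
  | zero _ hE => exact .zero _ (hE.of_iso e.symm)
  | step u g hm hd hA hP hφ hC =>
    obtain ⟨g', h', hd'⟩ := exists_dist_conj (Iso.refl _) e hd (u ≫ e.hom) (by simp)
    exact .step _ g' h' hd' hA hP hφ hC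

lemma HNChain.merge [HasBinaryBiproducts D] {P : ℝ → Set D}
    (hPiso : ∀ (φ : ℝ) (X Y : D), X ∈ P φ → Nonempty (X ≅ Y) → Y ∈ P φ)
    (hPbiprod : ∀ (φ : ℝ) (X Y : D), X ∈ P φ → Y ∈ P φ → (X ⊞ Y) ∈ P φ) :
    ∀ (N : ℕ) (l₁ l₂ : List ℝ) (E F : D), l₁.length + l₂.length ≤ N →
      HNChain P E l₁ → HNChain P F l₂ →
      ∃ l, HNChain P (E ⊞ F) l ∧ ∀ x ∈ l, x ∈ l₁ ∨ x ∈ l₂ := by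
  intro N
  induction N with
  | zero =>
    intro l₁ l₂ E F hlen h₁ h₂
    obtain rfl : l₁ = [] := List.length_eq_zero_iff.mp (by omega)
    cases h₁ with
    | zero _ hE =>
      exact ⟨l₂, h₂.of_iso (isZeroBiprodLeftIso F hE).symm, fun x hx => .inr hx⟩
  | succ N ih =>
    intro l₁ l₂ E F hlen h₁ h₂
    cases h₁ with
    | zero _ hE =>
      exact ⟨l₂, h₂.of_iso (isZeroBiprodLeftIso F hE).symm, fun x hx => .inr hx⟩
    | @step C E A l₁' φ₁ u g hm hd hA hP hφ hC =>
      cases h₂ with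
      | zero _ hF =>
        exact ⟨φ₁ :: l₁', (HNChain.step u g hm hd hA hP hφ hC).of_iso
          (isZeroBiprodRightIso E hF).symm, fun x hx => .inl hx⟩
      | @step C₂ F B l₂' φ₂ v g₂ hm₂ hd₂ hB hPB hφ₂ hC₂ =>
        simp only [List.length_cons] at hlen
        rcases lt_trichotomy φ₁ φ₂ with hlt | heq | hgt
        · obtain ⟨l, hl, hsub⟩ := ih l₁' (φ₂ :: l₂') C F (by simp; omega) hC
            (.step v g₂ hm₂ hd₂ hB hPB hφ₂ hC₂)
          obtain ⟨A', g', h', hd', ⟨eA⟩⟩ := biprod_dist hd (contractible_distinguished F)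
          have eA' : A ≅ A' := (isZeroBiprodRightIso A (isZero_zero D)).symm ≪≫ eA.symm
          refine ⟨φ₁ :: l, .step (biprod.map u (𝟙 F)) g' h' hd'
            (fun hz => hA (hz.of_iso eA')) (hPiso _ _ _ hP ⟨eA'⟩) ?_ hl, ?_⟩
          · intro x hx
            rcases hsub x hx with hx1 | hx2
            · exact hφ x hx1
            · rcases List.mem_cons.mp hx2 with hx2 | hx2
              · exact hx2 ▸ hlt
              · exact hlt.trans (hφ₂ x hx2)
          · intro x hx
            rcases List.mem_cons.mp hx with hx | hx
            · exact .inl (by simp [hx])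
            · rcases hsub x hx with hx1 | hx1
              · exact .inl (by simp [hx1])
              · exact .inr hx1
        · subst heq
          obtain ⟨l, hl, hsub⟩ := ih l₁' l₂' C C₂ (by omega) hC hC₂
          obtain ⟨A', g', h', hd', ⟨eA⟩⟩ := biprod_dist hd hd₂
          refine ⟨φ₁ :: l, .step (biprod.map u v) g' h' hd'
            (fun hz => (notIsZeroBiprodLeft B hA) (hz.of_iso eA.symm))
            (hPiso _ _ _ (hPbiprod _ _ _ hP hPB) ⟨eA.symm⟩) ?_ hl, ?_⟩
          · intro x hx
            rcases hsub x hx with hx1 | hx1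
            · exact hφ x hx1
            · exact hφ₂ x hx1
          · intro x hx
            rcases List.mem_cons.mp hx with hx | hx
            · exact .inl (by simp [hx])
            · rcases hsub x hx with hx1 | hx1
              · exact .inl (by simp [hx1])
              · exact .inr (by simp [hx1])
        · obtain ⟨l, hl, hsub⟩ := ih (φ₁ :: l₁') l₂' E C₂ (by simp; omega)
            (.step u g hm hd hA hP hφ hC) hC₂
          obtain ⟨A', g', h', hd', ⟨eA⟩⟩ := biprod_dist (contractible_distinguished E) hd₂
          have eA' : B ≅ A' := (isZeroBiprodLeftIso B (isZero_zero D)).symm ≪≫ eA.symm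
          refine ⟨φ₂ :: l, .step (biprod.map (𝟙 E) v) g' h' hd'
            (fun hz => hB (hz.of_iso eA')) (hPiso _ _ _ hPB ⟨eA'⟩) ?_ hl, ?_⟩
          · intro x hx
            rcases hsub x hx with hx1 | hx1
            · rcases List.mem_cons.mp hx1 with hx1 | hx1
              · exact hx1 ▸ hgt
              · exact hgt.trans (hφ x hx1)
            · exact hφ₂ x hx1
          · intro x hx
            rcases List.mem_cons.mp hx with hx | hx
            · exact .inr (by simp [hx])
            · rcases hsub x hx with hx1 | hx1
              · exact .inl hx1
              · exact .inr (by simp [hx1])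

lemma toHNChain (P : ℝ → Set D) :
    ∀ (n : ℕ) (X : Fin (n + 1) → D) (f : ∀ i : Fin n, X i.castSucc ⟶ X i.succ) (φ : Fin n → ℝ),
      IsZero (X 0) → StrictAnti φ →
      (∀ i : Fin n, ∃ (A : D) (g : X i.succ ⟶ A) (h : A ⟶ (X i.castSucc)⟦(1 : ℤ)⟧),
        (Triangle.mk (f i) g h ∈ distTriang D) ∧ ¬ IsZero A ∧ A ∈ P (φ i)) →
      ∃ l, HNChain P (X (Fin.last n)) l ∧ ∀ x ∈ l, ∃ i, x = φ i := by
  intro n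
  induction n with
  | zero =>
    intro X f φ h0 _ _
    refine ⟨[], .zero _ ?_, fun x hx => absurd hx List.not_mem_nil⟩
    convert h0 using 2
    rfl
  | succ n ih =>
    intro X f φ h0 hanti hstep
    obtain ⟨l, hc, hmem⟩ := ih (fun i => X (Fin.castLE (by omega) i))
      (fun i => f (Fin.castLE (by omega) i)) (fun i => φ (Fin.castLE (by omega) i))
      (by convert h0 using 2; rfl)
      (fun a b hab => hanti (show Fin.castLE (by omega) a < Fin.castLE (by omega) b from hab))
      (fun i => hstep (Fin.castLE (by omega) i))
    obtain ⟨A, g, h, hd, hA, hP⟩ := hstep (Fin.last n)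
    refine ⟨φ (Fin.last n) :: l, .step (f (Fin.last n)) g h hd hA hP ?_ hc, ?_⟩
    · intro x hx
      obtain ⟨i, rfl⟩ := hmem x hx
      exact hanti (show Fin.castLE (by omega) i < Fin.last n by simp [Fin.lt_def])
    · intro x hx
      rcases List.mem_cons.mp hx with hx | hx
      · exact ⟨Fin.last n, hx⟩
      · obtain ⟨i, rfl⟩ := hmem x hx
        exact ⟨_, rfl⟩

lemma snocStep (P : ℝ → Set D) {n : ℕ} (X : Fin (n + 1) → D)
    (f : ∀ i : Fin n, X i.castSucc ⟶ X i.succ) (φ : Fin n → ℝ) (V : D)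
    (u : X (Fin.last n) ⟶ V) (ψ : ℝ)
    (h0 : IsZero (X 0)) (hanti : StrictAnti φ) (hψ : ∀ i, ψ < φ i)
    (hstep : ∀ i : Fin n, ∃ (A : D) (g : X i.succ ⟶ A) (h : A ⟶ (X i.castSucc)⟦(1 : ℤ)⟧),
      (Triangle.mk (f i) g h ∈ distTriang D) ∧ ¬ IsZero A ∧ A ∈ P (φ i))
    (hu : ∃ (A : D) (g : V ⟶ A) (h : A ⟶ (X (Fin.last n))⟦(1 : ℤ)⟧),
      (Triangle.mk u g h ∈ distTriang D) ∧ ¬ IsZero A ∧ A ∈ P ψ) :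
    ∃ (X' : Fin (n + 2) → D) (f' : ∀ i : Fin (n + 1), X' i.castSucc ⟶ X' i.succ)
      (φ' : Fin (n + 1) → ℝ),
      IsZero (X' 0) ∧ X' (Fin.last (n + 1)) = V ∧ StrictAnti φ' ∧
      (∀ i, φ' i = ψ ∨ ∃ j, φ' i = φ j) ∧
      (∀ i : Fin (n + 1), ∃ (A : D) (g : X' i.succ ⟶ A) (h : A ⟶ (X' i.castSucc)⟦(1 : ℤ)⟧),
        (Triangle.mk (f' i) g h ∈ distTriang D) ∧ ¬ IsZero A ∧ A ∈ P (φ' i)) := by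
  have etop₁ : (Fin.snoc X V : Fin (n + 2) → D) (Fin.last n).castSucc = X (Fin.last n) :=
    Fin.snoc_castSucc ..
  have etop₂ : V = (Fin.snoc X V : Fin (n + 2) → D) (Fin.last n).succ := by
    rw [Fin.succ_last, Fin.snoc_last]
  have e₁ : ∀ j : Fin n, (Fin.snoc X V : Fin (n + 2) → D) j.castSucc.castSucc = X j.castSucc :=
    fun j => Fin.snoc_castSucc ..
  have e₂ : ∀ j : Fin n, X j.succ = (Fin.snoc X V : Fin (n + 2) → D) j.castSucc.succ := by
    intro j
    rw [Fin.succ_castSucc, Fin.snoc_castSucc]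
  refine ⟨Fin.snoc X V,
    fun i => Fin.lastCases (motive := fun i =>
        (Fin.snoc X V : Fin (n + 2) → D) i.castSucc ⟶ (Fin.snoc X V : Fin (n + 2) → D) i.succ)
      (eqToHom etop₁ ≫ u ≫ eqToHom etop₂)
      (fun j => eqToHom (e₁ j) ≫ f j ≫ eqToHom (e₂ j)) i,
    Fin.snoc φ ψ, ?_, Fin.snoc_last .., ?_, ?_, ?_⟩
  · have h00 : (Fin.snoc X V : Fin (n + 2) → D) 0 = X 0 := by
      rw [show (0 : Fin (n + 2)) = Fin.castSucc (0 : Fin (n + 1)) from Fin.ext (by simp),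
        Fin.snoc_castSucc]
    exact h00 ▸ h0
  · intro a b hab
    have ha : a ≠ Fin.last n := by
      rintro rfl
      exact (Fin.le_last b).not_gt hab
    obtain ⟨a', rfl⟩ := Fin.eq_castSucc_of_ne_last ha
    by_cases hb : b = Fin.last n
    · subst hb
      rw [Fin.snoc_last, Fin.snoc_castSucc]
      exact hψ a'
    · obtain ⟨b', rfl⟩ := Fin.eq_castSucc_of_ne_last hb
      rw [Fin.snoc_castSucc, Fin.snoc_castSucc]
      exact hanti (Fin.castSucc_lt_castSucc_iff.mp hab)
  · intro i
    refine Fin.lastCases ?_ ?_ i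
    · exact .inl (Fin.snoc_last ..)
    · exact fun j => .inr ⟨j, Fin.snoc_castSucc ..⟩
  · intro i
    refine Fin.lastCases ?_ ?_ i
    · obtain ⟨A, g, h, hd, hA, hP⟩ := hu
      obtain ⟨g', h', hd'⟩ := exists_dist_conj (eqToIso etop₁) (eqToIso etop₂) hd
        (eqToHom etop₁ ≫ u ≫ eqToHom etop₂) rfl
      rw [show (Fin.snoc φ ψ : Fin (n + 1) → ℝ) (Fin.last n) = ψ from Fin.snoc_last ..]
      simp only [Fin.lastCases_last]
      exact ⟨A, g', h', hd', hA, hP⟩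
    · intro j
      obtain ⟨A, g, h, hd, hA, hP⟩ := hstep j
      obtain ⟨g', h', hd'⟩ := exists_dist_conj (eqToIso (e₁ j)) (eqToIso (e₂ j)) hd
        (eqToHom (e₁ j) ≫ f j ≫ eqToHom (e₂ j)) rfl
      rw [show (Fin.snoc φ ψ : Fin (n + 1) → ℝ) j.castSucc = φ j from Fin.snoc_castSucc ..]
      simp only [Fin.lastCases_castSucc]
      exact ⟨A, g', h', hd', hA, hP⟩

lemma ofHNChain {P : ℝ → Set D} {E : D} {l : List ℝ} (hc : HNChain P E l) :
    ∃ (n : ℕ) (X : Fin (n + 1) → D) (f : ∀ i : Fin n, X i.castSucc ⟶ X i.succ)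
      (φ : Fin n → ℝ), IsZero (X 0) ∧ X (Fin.last n) = E ∧ StrictAnti φ ∧ (∀ i, φ i ∈ l) ∧
      ∀ i : Fin n, ∃ (A : D) (g : X i.succ ⟶ A) (h : A ⟶ (X i.castSucc)⟦(1 : ℤ)⟧),
        (Triangle.mk (f i) g h ∈ distTriang D) ∧ ¬ IsZero A ∧ A ∈ P (φ i) := by
  induction hc with
  | zero E hE =>
    exact ⟨0, fun _ => E, fun i => i.elim0, fun i => i.elim0, hE, rfl,
      fun a b h => a.elim0, fun i => i.elim0, fun i => i.elim0⟩
  | @step C V A l φ u g hm hd hA hP hφ hC ih =>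
    obtain ⟨n, X, f, φf, h0, htop, hanti, hmem, hstep⟩ := ih
    obtain ⟨g', h', hd'⟩ := exists_dist_conj (eqToIso htop) (Iso.refl V) hd
      (eqToHom htop ≫ u) (by simp)
    obtain ⟨X', f', φ', h0', htop', hanti', hmem', hstep'⟩ :=
      snocStep P X f φf V (eqToHom htop ≫ u) φ h0 hanti (fun i => hφ _ (hmem i)) hstep
      ⟨A, g', h', hd', hA, hP⟩
    refine ⟨n + 1, X', f', φ', h0', htop', hanti', ?_, hstep'⟩
    intro i
    rcases hmem' i with h | ⟨j, hj⟩
    · exact h ▸ List.mem_cons_self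
    · exact hj ▸ List.mem_cons_of_mem _ (hmem j)

/-- An object `E` has a Harder–Narasimhan filtration with respect to the slicing `P`:
a finite sequence `0 = X₀ → X₁ → ⋯ → Xₙ ≅ E` such that the cone of each
`X_{i-1} → X_i` is a nonzero object of `P(φ_i)`, with `φ₁ > φ₂ > ⋯ > φₙ`. -/
def HasHNFiltration (P : ℝ → Set D) (E : D) : Prop :=
  ∃ (n : ℕ) (X : Fin (n + 1) → D) (f : ∀ i : Fin n, X i.castSucc ⟶ X i.succ)
    (φ : Fin n → ℝ), IsZero (X 0) ∧ Nonempty (X (Fin.last n) ≅ E) ∧ StrictAnti φ ∧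
    ∀ i : Fin n, ∃ (A : D) (g : X i.succ ⟶ A) (h : A ⟶ (X i.castSucc)⟦(1 : ℤ)⟧),
      (Triangle.mk (f i) g h ∈ distTriang D) ∧ ¬ IsZero A ∧ A ∈ P (φ i)

theorem stmt4 [HasBinaryBiproducts D]
    (Z : D → ℂ)
    -- `Z` is additive on distinguished triangles
    (hZadd : ∀ T ∈ distTriang D, Z (Triangle.obj₂ T) = Z T.obj₁ + Z T.obj₃)
    (P : ℝ → Set D)
    -- each `P φ` is a strictly full additive subcategory
    (hPiso : ∀ (φ : ℝ) (X Y : D), X ∈ P φ → Nonempty (X ≅ Y) → Y ∈ P φ)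
    (hPzero : ∀ (φ : ℝ) (X : D), IsZero X → X ∈ P φ)
    (hPbiprod : ∀ (φ : ℝ) (X Y : D), X ∈ P φ → Y ∈ P φ → (X ⊞ Y) ∈ P φ)
    -- (s1)
    (hs1 : ∀ (φ : ℝ) (E : D), E ∈ P φ → ¬ IsZero E →
      ∃ m : ℝ, 0 < m ∧ Z E = (m : ℂ) * Complex.exp ((Real.pi : ℂ) * Complex.I * (φ : ℂ)))
    -- (s2)
    (hs2 : ∀ (φ ψ : ℝ), ψ < φ → ∀ E ∈ P φ, ∀ F ∈ P ψ, ∀ f : E ⟶ F, f = 0)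
    -- (s3)
    (hs3 : ∀ (φ : ℝ) (X : D), X ∈ P (φ + 1) ↔ ∃ Y ∈ P φ, Nonempty (X ≅ Y⟦(1 : ℤ)⟧))
    (X Y : D) (hX : HasHNFiltration P X) (hY : HasHNFiltration P Y) :
    HasHNFiltration P (X ⊞ Y) := by
  
  obtain ⟨n₁, XX, ff, pp, h0₁, ⟨e₁⟩, hanti₁, hstep₁⟩ := hX
  obtain ⟨l₁, hc₁, -⟩ := toHNChain P n₁ XX ff pp h0₁ hanti₁ hstep₁
  have hcX : HNChain P X l₁ := hc₁.of_iso e₁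
  obtain ⟨n₂, YY, gg, qq, h0₂, ⟨e₂⟩, hanti₂, hstep₂⟩ := hY
  obtain ⟨l₂, hc₂, -⟩ := toHNChain P n₂ YY gg qq h0₂ hanti₂ hstep₂
  have hcY : HNChain P Y l₂ := hc₂.of_iso e₂
  obtain ⟨l, hl, -⟩ := HNChain.merge hPiso hPbiprod (l₁.length + l₂.length) l₁ l₂ X Y
    le_rfl hcX hcY
  obtain ⟨n, X', f', φ', h0, htop, hanti, -, hstep⟩ := ofHNChain hl
  exact ⟨n, X', f', φ', h0, ⟨eqToIso htop⟩, hanti, hstep⟩
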